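/- arXiv:1301.3996 — 2 statements merged into one kernel-verified Lean document; each statement's English description precedes it below -/
import Mathlib

section
/- In an execution where all nodes are correct, the total number of messages sent by the protocol on a graph with |G| nodes and maximum degree d is at most |G|·(1 + d + d² + ⋯ + dⁿ), i.e., O(dⁿ·|G|). -/
open SimpleGraph

namespace ByzBroadcast

variable {V : Type*} {M : Type*}

/-- The interior vertices of a walk (all vertices except the two endpoints). -/
def interior {G : SimpleGraph V} {u v : V} (p : G.Walk u v) : List V :=
  p.support.tail.dropLast

/-- `H = max_i H_i`. -/
def Hmax (n : ℕ) (Hv : Fin n → ℕ) : ℕ := Finset.univ.sup Hv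

/-- `Critical(u)`: there exist `n` distinct Byzantine nodes and `n` pairwise
disjoint paths of lengths at most `H_1, …, H_n` connecting `u` to them. -/
def Critical (G : SimpleGraph V) (correct : V → Prop) (n : ℕ) (Hv : Fin n → ℕ)
    (u : V) : Prop :=
  ∃ b : Fin n → V, Function.Injective b ∧ (∀ i, ¬ correct (b i)) ∧
    ∃ X : (i : Fin n) → G.Walk u (b i),
      (∀ i, (X i).IsPath ∧ (X i).length ≤ Hv i) ∧
      ∀ i j, i ≠ j → List.Disjoint (interior (X i)) (interior (X j))

/-- `v` admits `n` pairwise disjoint fully-correct paths of lengths at most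
`H_1, …, H_n` to `n` distinct nodes of `R`. -/
def Extends (G : SimpleGraph V) (correct : V → Prop) (n : ℕ) (Hv : Fin n → ℕ)
    (R : Set V) (v : V) : Prop :=
  ∃ r : Fin n → V, Function.Injective r ∧ (∀ i, r i ∈ R) ∧
    ∃ X : (i : Fin n) → G.Walk v (r i),
      (∀ i, (X i).IsPath ∧ (X i).length ≤ Hv i ∧
        ∀ x ∈ (X i).support, correct x) ∧
      ∀ i j, i ≠ j → List.Disjoint (interior (X i)) (interior (X j))

variable [DecidableEq V]

/-- An asynchronous execution of the broadcast protocol with parameters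
`(H_1, …, H_n)`.  `sent v m' S t` means node `v` multicasts the message
`(m', S)` at time `t`; `recd v m' S t` means `(m', S)` belongs to the `Rec`
set of `v` at time `t`; `delivers v m' t` means `v` delivers information `m'`
at time `t`.  The fields are exactly the rules of the protocol (for correct
nodes; Byzantine nodes are unconstrained) together with fair asynchronous
scheduling (every sent message is eventually processed by each correct
neighbor). -/
structure Exec (G : SimpleGraph V) (correct : V → Prop)
    (source : V) (m : M) (n : ℕ) (Hv : Fin n → ℕ) where
  sent : V → M → Finset V → ℕ → Prop
  recd : V → M → Finset V → ℕ → Prop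
  delivers : V → M → ℕ → Prop
  /-- Initially, the source multicasts `(m, ∅)`. -/
  src_sent : sent source m ∅ 0
  /-- The correct source only ever multicasts `(m, ∅)` (oral model). -/
  src_only : ∀ m' S t, sent source m' S t → m' = m ∧ S = ∅
  /-- A correct node receiving a message directly from the source delivers
  it and multicasts `(m', ∅)`. -/
  recv_src : ∀ v m' S t, G.Adj source v → correct v → sent source m' S t →
      ∃ t', delivers v m' t' ∧ sent v m' ∅ t'
  /-- A correct node receiving `(m', S)` from a neighbor `q ∉ S` with
  `card S < H` records and multicasts `(m', S ∪ {q})`. -/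
  recv_fwd : ∀ q v m' S t, G.Adj q v → correct v → sent q m' S t →
      q ∉ S → S.card < Hmax n Hv →
      ∃ t', t < t' ∧ recd v m' (insert q S) t' ∧ sent v m' (insert q S) t'
  /-- Delivery condition (sufficiency): `n` recorded sets of cardinalities at
  most `H_1, …, H_n`, pairwise disjoint. -/
  deliver_suf : ∀ v m' (S : Fin n → Finset V), correct v →
      (∀ i, (∃ t, recd v m' (S i) t) ∧ (S i).card ≤ Hv i) →
      (∀ i j, i ≠ j → Disjoint (S i) (S j)) →
      ∃ t', delivers v m' t' ∧ sent v m' ∅ t'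
  /-- A correct node only sends messages according to the protocol. -/
  sent_inv : ∀ v m' S t, correct v → v ≠ source → sent v m' S t →
      (S = ∅ ∧ delivers v m' t) ∨
      (∃ q ∈ S, G.Adj v q ∧ ∃ t', t' < t ∧ sent q m' (S.erase q) t')
  /-- A recorded message was received from a neighbor belonging to its set. -/
  recd_inv : ∀ v m' S t, correct v → recd v m' S t →
      S.card ≤ Hmax n Hv ∧
      ∃ q ∈ S, G.Adj v q ∧ ∃ t', t' < t ∧ sent q m' (S.erase q) t'
  /-- A correct node only delivers upon a direct source message or upon the
  `n`-disjoint-sets condition. -/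
  deliver_inv : ∀ v m' t, correct v → delivers v m' t →
      m' = m ∨
      ∃ S : Fin n → Finset V,
        (∀ i, (∃ t' ≤ t, recd v m' (S i) t') ∧ (S i).card ≤ Hv i) ∧
        (∀ i j, i ≠ j → Disjoint (S i) (S j))

/-- A reliable node set: a set of nodes that deliver the good information `m`
in every possible execution. -/
def Reliable (G : SimpleGraph V) (correct : V → Prop) (source : V) (m : M)
    (n : ℕ) (Hv : Fin n → ℕ) (R : Set V) : Prop :=
  ∀ E : Exec G correct source m n Hv, ∀ r ∈ R, ∃ t, E.delivers r m t


/-- **Message complexity.** When all nodes are correct, the messages sent by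
the protocol are pairs `(v, S)` where `S` is the chain of previous relays:
either `S = ∅`, or the message extends a message `(q, S \ {q})` sent by a
neighbor `q ∈ S`; chains have length at most `n`. On a graph of maximum
degree `d` with `|G|` nodes, the total number of such messages is at most
`|G| · (1 + d + d² + ⋯ + dⁿ)`, i.e. `O(dⁿ·|G|)`. -/
theorem message_complexity [Fintype V] (G : SimpleGraph V)
    [DecidableRel G.Adj] (n d : ℕ) (hd : ∀ v : V, G.degree v ≤ d)
    (sends : Finset (V × Finset V))
    (hchain : ∀ p ∈ sends, p.2 = (∅ : Finset V) ∨
      ∃ q ∈ p.2, G.Adj p.1 q ∧ (q, p.2.erase q) ∈ sends)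
    (hlen : ∀ p ∈ sends, p.2.card ≤ n) :
    sends.card ≤ Fintype.card V * ∑ k ∈ Finset.range (n + 1), d ^ k := by
  classical
  set f : ℕ → Finset (V × Finset V) := fun k => sends.filter (fun p => p.2.card = k) with hf
  have hbound : ∀ k, (f k).card ≤ Fintype.card V * d ^ k := by
    intro k
    induction k with
    | zero =>
      have hsub : f 0 ⊆ Finset.univ.image (fun v : V => (v, (∅ : Finset V))) := by
        intro p hp
        simp only [hf, Finset.mem_filter, Finset.card_eq_zero] at hp
        simp only [Finset.mem_image, Finset.mem_univ, true_and]
        exact ⟨p.1, by rw [← hp.2]⟩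
      calc (f 0).card ≤ _ := Finset.card_le_card hsub
        _ ≤ Finset.univ.card := Finset.card_image_le
        _ = Fintype.card V * d ^ 0 := by rw [pow_zero, Nat.mul_one, Finset.card_univ]
    | succ k ih =>
      have hsub : f (k + 1) ⊆ (f k).biUnion
          (fun p => (G.neighborFinset p.1).image (fun v => (v, insert p.1 p.2))) := by
        intro p hp
        simp only [hf, Finset.mem_filter] at hp
        obtain ⟨hps, hpc⟩ := hp
        rcases hchain p hps with h0 | ⟨q, hq, hadj, hqs⟩
        · simp [h0] at hpc
        · have hcard : (p.2.erase q).card = k := by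
            have := Finset.card_erase_of_mem hq
            omega
          refine Finset.mem_biUnion.2 ⟨(q, p.2.erase q), ?_, ?_⟩
          · simp [hf, hqs, hcard]
          · simp only [Finset.mem_image, mem_neighborFinset]
            exact ⟨p.1, hadj.symm, by rw [Finset.insert_erase hq]⟩
      calc (f (k + 1)).card ≤ _ := Finset.card_le_card hsub
        _ ≤ ∑ p ∈ f k, ((G.neighborFinset p.1).image (fun v => (v, insert p.1 p.2))).card :=
            Finset.card_biUnion_le
        _ ≤ ∑ p ∈ f k, d := by
            refine Finset.sum_le_sum fun p _ => ?_
            exact le_trans Finset.card_image_le (by simpa [G.card_neighborFinset_eq_degree] using hd p.1)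
        _ = (f k).card * d := by rw [Finset.sum_const, smul_eq_mul]
        _ ≤ Fintype.card V * d ^ k * d := Nat.mul_le_mul_right d ih
        _ = Fintype.card V * d ^ (k + 1) := by ring
  have hcard : sends.card = ∑ k ∈ Finset.range (n + 1), (f k).card := by
    simp only [hf]
    exact Finset.card_eq_sum_card_fiberwise
      (f := fun p : V × Finset V => p.2.card) (t := Finset.range (n + 1))
      (fun p hp => Finset.mem_range.2 (Nat.lt_succ_of_le (hlen p hp)))
  rw [hcard, Finset.mul_sum]
  exact Finset.sum_le_sum fun k _ => hbound k

end ByzBroadcast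
end

section
/- For the protocol setting (1, H) (n = 2, H_1 = 1, H_2 = H): if every pair of distinct Byzantine nodes is at graph distance at least H + 2, then for every correct node u the proposition Critical(u) is false, and hence no correct node delivers a false information. -/
open SimpleGraph

namespace ByzBroadcast

variable {V : Type*} {M : Type*}

variable [DecidableEq V]

lemma sent_byz {V : Type*} {M : Type*} [DecidableEq V] {G : SimpleGraph V}
    {correct : V → Prop} {source : V} {m : M} {n : ℕ} {Hv : Fin n → ℕ}
    (E : Exec G correct source m n Hv)
    {m' : M} (hm : m' ≠ m) {T : ℕ}
    (IH : ∀ t < T, ∀ v, correct v → ¬ E.delivers v m' t) :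
    ∀ k (S : Finset V) q t, S.card ≤ k → t < T → E.sent q m' S t →
      ∃ b, ¬ correct b ∧ (b = q ∨ b ∈ S) ∧ G.edist q b ≤ S.card := by
  intro k
  induction k with
  | zero =>
    intro S q t hcard ht hsent
    by_cases hq : correct q
    · have hS : S = ∅ := Finset.card_eq_zero.mp (Nat.le_zero.mp hcard)
      subst hS
      by_cases hqs : q = source
      · subst hqs; exact absurd (E.src_only m' ∅ t hsent).1 hm
      rcases E.sent_inv q m' ∅ t hq hqs hsent with ⟨_, hd⟩ | ⟨q', hq', _⟩
      · exact absurd hd (IH t ht q hq)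
      · exact absurd hq' (Finset.notMem_empty q')
    · exact ⟨q, hq, Or.inl rfl, by simp⟩
  | succ k ih =>
    intro S q t hcard ht hsent
    by_cases hq : correct q
    · by_cases hqs : q = source
      · subst hqs; exact absurd (E.src_only m' S t hsent).1 hm
      rcases E.sent_inv q m' S t hq hqs hsent with ⟨_, hd⟩ | ⟨q', hq', hadj, t', ht', hsent'⟩
      · exact absurd hd (IH t ht q hq)
      · have hcard' : (S.erase q').card ≤ k := by
          have := Finset.card_erase_of_mem hq'
          omega
        obtain ⟨b, hb, hbmem, hbd⟩ := ih (S.erase q') q' t' hcard' (ht'.trans ht) hsent'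
        refine ⟨b, hb, Or.inr ?_, ?_⟩
        · rcases hbmem with h | h
          · exact h ▸ hq'
          · exact Finset.mem_of_mem_erase h
        · calc G.edist q b ≤ G.edist q q' + G.edist q' b := G.edist_triangle
          _ ≤ 1 + ((S.erase q').card : ℕ∞) := by
              gcongr
              exact (SimpleGraph.edist_le (SimpleGraph.Walk.cons hadj SimpleGraph.Walk.nil)).trans (by simp)
          _ ≤ (S.card : ℕ∞) := by
              rw [Finset.card_erase_of_mem hq']
              have h1 : 1 ≤ S.card := Finset.card_pos.mpr ⟨q', hq'⟩
              have : (1 : ℕ∞) + ((S.card - 1 : ℕ) : ℕ∞) = ((1 + (S.card - 1) : ℕ) : ℕ∞) := by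
                push_cast; ring
              rw [this]
              exact_mod_cast Nat.le_of_eq (by omega)
    · exact ⟨q, hq, Or.inl rfl, by simp⟩

/-- For the protocol setting `(1, H)`: if every pair of distinct Byzantine
nodes is at graph distance at least `H + 2`, then `Critical(u)` is false for
every correct node `u`, and hence no correct node delivers a false
information. -/
theorem spacing_safety (G : SimpleGraph V) (correct : V → Prop) (source : V)
    (m : M) (H : ℕ) (hsrc : correct source)
    (hspace : ∀ b₁ b₂ : V, ¬ correct b₁ → ¬ correct b₂ → b₁ ≠ b₂ →
      (H + 2 : ℕ∞) ≤ G.edist b₁ b₂) :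
    (∀ u, correct u → ¬ Critical G correct 2 ![1, H] u) ∧
    ∀ E : Exec G correct source m 2 ![1, H], ∀ v m' t, correct v →
      E.delivers v m' t → m' = m := by
  constructor
  · rintro u hu ⟨b, hinj, hbyz, X, hX, -⟩
    have h01 : b 0 ≠ b 1 := fun h => absurd (hinj h) (by decide)
    have d0 : G.edist u (b 0) ≤ 1 := by
      refine (SimpleGraph.edist_le (X 0)).trans ?_
      exact_mod_cast Nat.cast_le.mpr ((hX 0).2.trans (by simp))
    have d1 : G.edist u (b 1) ≤ H := by
      refine (SimpleGraph.edist_le (X 1)).trans ?_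
      exact_mod_cast Nat.cast_le.mpr ((hX 1).2.trans (by simp))
    have h2 : G.edist (b 0) (b 1) ≤ 1 + H := by
      calc G.edist (b 0) (b 1) ≤ G.edist (b 0) u + G.edist u (b 1) := G.edist_triangle
        _ ≤ 1 + H := by rw [SimpleGraph.edist_comm (u := b 0) (v := u)]; exact add_le_add d0 d1
    have h3 := (hspace (b 0) (b 1) (hbyz 0) (hbyz 1) h01).trans h2
    have h4 : (H + 2 : ℕ) ≤ 1 + H := by exact_mod_cast h3
    omega
  · intro E
    suffices h : ∀ t, ∀ v m', correct v → E.delivers v m' t → m' = m by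
      exact fun v m' t hv hd => h t v m' hv hd
    intro t
    induction t using Nat.strong_induction_on with
    | _ t IH =>
      intro v m' hv hd
      by_contra hm
      have IH' : ∀ t' < t, ∀ w, correct w → ¬ E.delivers w m' t' :=
        fun t' ht w hw hd' => hm (IH t' ht w m' hw hd')
      rcases E.deliver_inv v m' t hv hd with h | ⟨S, hS, hdisj⟩
      · exact hm h
      have key : ∀ i : Fin 2, ∃ b, ¬ correct b ∧ b ∈ S i ∧
          G.edist v b ≤ ((S i).card : ℕ∞) := by
        intro i
        obtain ⟨⟨t', ht', hrec⟩, hci⟩ := hS i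
        obtain ⟨-, q, hq, hadj, t'', ht'', hsent⟩ := E.recd_inv v m' (S i) t' hv hrec
        have htT : t'' < t := lt_of_lt_of_le ht'' ht'
        obtain ⟨b, hb, hbmem, hbd⟩ :=
          sent_byz E hm IH' ((S i).erase q).card ((S i).erase q) q t'' le_rfl htT hsent
        have hbS : b ∈ S i := by
          rcases hbmem with h | h
          · exact h ▸ hq
          · exact Finset.mem_of_mem_erase h
        refine ⟨b, hb, hbS, ?_⟩
        calc G.edist v b ≤ G.edist v q + G.edist q b := G.edist_triangle
          _ ≤ 1 + (((S i).erase q).card : ℕ∞) := by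
              gcongr
              exact (SimpleGraph.edist_le (SimpleGraph.Walk.cons hadj SimpleGraph.Walk.nil)).trans
                (by simp)
          _ ≤ ((S i).card : ℕ∞) := by
              rw [Finset.card_erase_of_mem hq]
              have h1 : 1 ≤ (S i).card := Finset.card_pos.mpr ⟨q, hq⟩
              have heq : (1 : ℕ∞) + (((S i).card - 1 : ℕ) : ℕ∞)
                  = ((1 + ((S i).card - 1) : ℕ) : ℕ∞) := by push_cast; ring
              rw [heq]
              exact_mod_cast Nat.le_of_eq (by omega)
      obtain ⟨b0, hb0, hb0S, hd0⟩ := key 0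
      obtain ⟨b1, hb1, hb1S, hd1⟩ := key 1
      have hne : b0 ≠ b1 := fun h =>
        Finset.disjoint_left.mp (hdisj 0 1 (by decide)) hb0S (h ▸ hb1S)
      have hc0 : (S 0).card ≤ 1 := (hS 0).2.trans_eq (by simp)
      have hc1 : (S 1).card ≤ H := (hS 1).2.trans_eq (by simp)
      have h2 : G.edist b0 b1 ≤ 1 + H := by
        calc G.edist b0 b1 ≤ G.edist b0 v + G.edist v b1 := G.edist_triangle
          _ ≤ 1 + H := by
              rw [SimpleGraph.edist_comm (u := b0) (v := v)]
              exact add_le_add (hd0.trans (by exact_mod_cast Nat.cast_le.mpr hc0))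
                (hd1.trans (by exact_mod_cast Nat.cast_le.mpr hc1))
      have h3 := (hspace b0 b1 hb0 hb1 hne).trans h2
      have h4 : (H + 2 : ℕ) ≤ 1 + H := by exact_mod_cast h3
      omega


end ByzBroadcast
end
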